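/- For a > 0, let u_a > 0 be the first eigenfunction of -u'' + a x u = λ u on (-1,1) with Robin boundary conditions u'(±1) = ∓α u(±1). Then u_a(1)^2 < u_a(-1)^2. -/

import Mathlib

open Set

theorem first_eigenfunction_boundary_comparison
    (a α lam : ℝ) (ha : 0 < a)
    (u u' u'' : ℝ → ℝ)
    (hd1 : ∀ x ∈ Icc (-1:ℝ) 1, HasDerivWithinAt u (u' x) (Icc (-1:ℝ) 1) x)
    (hd2 : ∀ x ∈ Icc (-1:ℝ) 1, HasDerivWithinAt u' (u'' x) (Icc (-1:ℝ) 1) x)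
    (heq : ∀ x ∈ Icc (-1:ℝ) 1, -u'' x + a * x * u x = lam * u x)
    (hbcR : u' 1 = -α * u 1) (hbcL : u' (-1) = α * u (-1))
    (hpos : ∀ x ∈ Icc (-1:ℝ) 1, 0 < u x) :
    u 1 ^ 2 < u (-1) ^ 2 := by
  set I : Set ℝ := Icc (-1:ℝ) 1 with hI
  have hnegmem : ∀ x ∈ I, -x ∈ I := fun x hx => ⟨by linarith [hx.2], by linarith [hx.1]⟩
  have hmem1 : (1:ℝ) ∈ I := ⟨by norm_num, le_refl 1⟩
  have hmemm1 : (-1:ℝ) ∈ I := ⟨le_refl _, by norm_num⟩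
  set W : ℝ → ℝ := fun x => -(u' x * u (-x) + u x * u' (-x)) with hW
  -- derivative of x ↦ u(-x) and x ↦ u'(-x) within I
  have hnu : ∀ x ∈ I, HasDerivWithinAt (fun x => u (-x)) (-(u' (-x))) I x := by
    intro x hx
    have h := (hd1 (-x) (hnegmem x hx)).comp x ((hasDerivWithinAt_id x I).neg) hnegmem
    simpa [mul_comm, Function.comp_def] using h
  have hnu' : ∀ x ∈ I, HasDerivWithinAt (fun x => u' (-x)) (-(u'' (-x))) I x := by
    intro x hx
    have h := (hd2 (-x) (hnegmem x hx)).comp x ((hasDerivWithinAt_id x I).neg) hnegmem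
    simpa [mul_comm, Function.comp_def] using h
  have hu'' : ∀ x ∈ I, u'' x = (a * x - lam) * u x := by
    intro x hx; have := heq x hx; linarith
  have hWd : ∀ x ∈ I, HasDerivWithinAt W (-(2 * a * x * (u x * u (-x)))) I x := by
    intro x hx
    have h := (((hd2 x hx).mul (hnu x hx)).add ((hd1 x hx).mul (hnu' x hx))).neg
    have hval : -(u'' x * u (-x) + u' x * -u' (-x) + (u' x * u' (-x) + u x * -u'' (-x)))
        = -(2 * a * x * (u x * u (-x))) := by
      rw [hu'' x hx, hu'' (-x) (hnegmem x hx)]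
      ring
    rw [hval] at h
    exact h
  have hWd' : ∀ x ∈ Ioo (-1:ℝ) 1, HasDerivAt W (-(2 * a * x * (u x * u (-x)))) x := by
    intro x hx
    exact (hWd x (Ioo_subset_Icc_self hx)).hasDerivAt (Icc_mem_nhds hx.1 hx.2)
  have hWcont : ContinuousOn W I := by
    intro x hx
    exact ((hWd x hx).continuousWithinAt)
  have hW1 : W 1 = 0 := by simp only [hW, hbcR, hbcL]; ring
  have hWm1 : W (-1) = 0 := by simp only [hW]; rw [neg_neg, hbcR, hbcL]; ring
  -- W > 0 on Ioo (-1) 1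
  have hWpos : ∀ x ∈ Ioo (-1:ℝ) 1, 0 < W x := by
    intro x hx
    rcases le_or_gt x 0 with hx0 | hx0
    · -- strict mono on Icc (-1) 0
      have hmono : StrictMonoOn W (Icc (-1:ℝ) 0) := by
        apply strictMonoOn_of_deriv_pos (convex_Icc _ _)
          (hWcont.mono (Icc_subset_Icc le_rfl (by norm_num)))
        intro y hy
        rw [interior_Icc] at hy
        have hy' : y ∈ Ioo (-1:ℝ) 1 := ⟨hy.1, by linarith [hy.2]⟩
        rw [(hWd' y hy').deriv]
        have hup := hpos y (Ioo_subset_Icc_self hy')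
        have hup2 := hpos (-y) (hnegmem y (Ioo_subset_Icc_self hy'))
        have h := mul_pos (neg_pos.mpr hy.2) (mul_pos ha (mul_pos hup hup2))
        nlinarith [h]
      have := hmono ⟨le_rfl, by norm_num⟩ ⟨le_of_lt hx.1, hx0⟩ hx.1
      rwa [hWm1] at this
    · -- strict anti on Icc 0 1
      have hanti : StrictAntiOn W (Icc (0:ℝ) 1) := by
        apply strictAntiOn_of_deriv_neg (convex_Icc _ _)
          (hWcont.mono (Icc_subset_Icc (by norm_num) le_rfl))
        intro y hy
        rw [interior_Icc] at hy
        have hy' : y ∈ Ioo (-1:ℝ) 1 := ⟨by linarith [hy.1], hy.2⟩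
        rw [(hWd' y hy').deriv]
        have hup := hpos y (Ioo_subset_Icc_self hy')
        have hup2 := hpos (-y) (hnegmem y (Ioo_subset_Icc_self hy'))
        have h := mul_pos hy.1 (mul_pos ha (mul_pos hup hup2))
        nlinarith [h]
      have := hanti ⟨le_of_lt hx0, le_of_lt hx.2⟩ ⟨by norm_num, le_rfl⟩ hx.2
      rwa [hW1] at this
  -- g = u(-x)/u(x) strictly increasing on I
  set g : ℝ → ℝ := fun x => u (-x) / u x with hg
  have hgcont : ContinuousOn g I := by
    apply ContinuousOn.div
    · exact ContinuousOn.comp (fun x hx => (hd1 x hx).continuousWithinAt)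
        continuous_neg.continuousOn hnegmem
    · exact fun x hx => (hd1 x hx).continuousWithinAt
    · exact fun x hx => ne_of_gt (hpos x hx)
  have hgmono : StrictMonoOn g I := by
    apply strictMonoOn_of_deriv_pos (convex_Icc _ _) hgcont
    intro x hx
    rw [interior_Icc] at hx
    have hxI : x ∈ I := Ioo_subset_Icc_self hx
    have hmxI : -x ∈ Ioo (-1:ℝ) 1 := ⟨by linarith [hx.2], by linarith [hx.1]⟩
    have hud : HasDerivAt u (u' x) x :=
      (hd1 x hxI).hasDerivAt (Icc_mem_nhds hx.1 hx.2)
    have hud2 : HasDerivAt (fun y => u (-y)) (-(u' (-x))) x := by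
      have h1 : HasDerivAt u (u' (-x)) (-x) :=
        (hd1 (-x) (hnegmem x hxI)).hasDerivAt (Icc_mem_nhds hmxI.1 hmxI.2)
      have := h1.comp x (hasDerivAt_neg x)
      simpa [mul_comm, Function.comp_def] using this
    have hgd : HasDerivAt g ((-(u' (-x)) * u x - u (-x) * u' x) / u x ^ 2) x :=
      hud2.div hud (ne_of_gt (hpos x hxI))
    rw [hgd.deriv]
    apply div_pos
    · have := hWpos x hx
      simp only [hW] at this
      nlinarith
    · exact pow_pos (hpos x hxI) 2
  have hkey := hgmono hmemm1 hmem1 (by norm_num)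
  simp only [hg, neg_neg] at hkey
  rw [div_lt_div_iff₀ (hpos _ hmemm1) (hpos _ hmem1)] at hkey
  nlinarith
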